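/- Let G be a group of finite exponent e, not locally cyclic. Then every independent set in the non-cyclic graph of G has size at most e; moreover the independence number equals max{|x| : x ∈ G} − |Cyc(G)| when G is finite. -/

import Mathlib

/-- `Cyc(G)`. -/
def cycSet (G : Type*) [Group G] : Set G :=
  {y | ∀ x : G, IsCyclic ↥(Subgroup.closure ({x, y} : Set G))}

/-- An independent set of the non-cyclic graph of `G`. -/
def ncIndep {G : Type*} [Group G] (X : Set G) : Prop :=
  X ⊆ (Set.univ \ cycSet G) ∧
    ∀ x ∈ X, ∀ y ∈ X, x ≠ y → IsCyclic ↥(Subgroup.closure ({x, y} : Set G))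

section Helpers

variable {G : Type*} [Group G]

open Subgroup

variable {G : Type*} [Group G]

lemma commute_of_cyclic {x y : G} (h : IsCyclic ↥(Subgroup.closure ({x, y} : Set G))) :
    Commute x y := by
  letI := h.commGroup
  have hx : x ∈ Subgroup.closure ({x, y} : Set G) :=
    Subgroup.subset_closure (by simp)
  have hy : y ∈ Subgroup.closure ({x, y} : Set G) :=
    Subgroup.subset_closure (by simp)
  have : (⟨x, hx⟩ * ⟨y, hy⟩ : ↥(Subgroup.closure ({x, y} : Set G)))
      = ⟨y, hy⟩ * ⟨x, hx⟩ := mul_comm _ _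
  have := congrArg (Subtype.val) this
  exact (by simpa using this : x * y = y * x)

lemma zpowers_eq_of_gen {H : Subgroup G} {ζ : ↥H} (hζ : ∀ y : ↥H, y ∈ Subgroup.zpowers ζ) :
    Subgroup.zpowers (ζ : G) = H := by
  apply le_antisymm (Subgroup.zpowers_le.2 ζ.2)
  intro y hy
  obtain ⟨k, hk⟩ := hζ ⟨y, hy⟩
  exact ⟨k, by simpa using congrArg Subtype.val hk⟩

lemma finite_zpowers_of {a : G} (ha : orderOf a ≠ 0) : Finite ↥(Subgroup.zpowers a) :=
  Nat.finite_of_card_ne_zero (by rwa [Nat.card_zpowers])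

lemma subgroup_eq_of_le_of_card_le {H K : Subgroup G} (h : H ≤ K) (hf : Finite ↥K)
    (hc : Nat.card K ≤ Nat.card H) : H = K := by
  apply SetLike.coe_injective
  have hfin : (K : Set G).Finite := @Set.toFinite _ _ hf
  exact Set.eq_of_subset_of_ncard_le h
    (by rwa [← Nat.card_coe_set_eq, ← Nat.card_coe_set_eq]) hfin

lemma orderOf_pow_div {a : G} (hm : orderOf a ≠ 0) {d : ℕ} (hd : d ∣ orderOf a) :
    orderOf (a ^ (orderOf a / d)) = d := by
  have hd0 : d ≠ 0 := by rintro rfl; exact hm (Nat.eq_zero_of_zero_dvd hd)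
  have hne : orderOf a / d ≠ 0 :=
    (Nat.div_ne_zero_iff).2 ⟨hd0, Nat.le_of_dvd (Nat.pos_of_ne_zero hm) hd⟩
  rw [orderOf_pow' _ hne, Nat.gcd_eq_right (Nat.div_dvd_of_dvd hd), Nat.div_div_self hd hm]

lemma gcd_lcm_distrib' {a b c : ℕ} (ha : a ≠ 0) (hb : b ≠ 0) (hc : c ≠ 0) :
    Nat.gcd a (Nat.lcm b c) = Nat.lcm (Nat.gcd a b) (Nat.gcd a c) := by
  have hbc : Nat.lcm b c ≠ 0 := Nat.lcm_ne_zero hb hc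
  have hab : Nat.gcd a b ≠ 0 := Nat.gcd_ne_zero_left ha
  have hac : Nat.gcd a c ≠ 0 := Nat.gcd_ne_zero_left ha
  apply Nat.eq_of_factorization_eq (Nat.gcd_ne_zero_left ha) (Nat.lcm_ne_zero hab hac)
  intro p
  rw [Nat.factorization_gcd ha hbc, Nat.factorization_lcm hab hac,
    Nat.factorization_lcm hb hc, Nat.factorization_gcd ha hb, Nat.factorization_gcd ha hc,
    Finsupp.inf_apply, Finsupp.sup_apply, Finsupp.sup_apply, Finsupp.inf_apply,
    Finsupp.inf_apply]
  exact inf_sup_left _ _ _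
lemma pow_gcd_mem_zpowers (htor : ∀ u : G, orderOf u ≠ 0) {a x : G}
    (h : IsCyclic ↥(Subgroup.closure ({a, x} : Set G))) :
    a ^ (orderOf a / Nat.gcd (orderOf a) (orderOf x)) ∈ Subgroup.zpowers x := by
  classical
  set H := Subgroup.closure ({a, x} : Set G) with hH
  set m := orderOf a
  set n := orderOf x
  set d := Nat.gcd m n with hdd
  have hm : m ≠ 0 := htor a
  have hn : n ≠ 0 := htor x
  have hd0 : 0 < d := Nat.gcd_pos_of_pos_left _ (Nat.pos_of_ne_zero hm)
  obtain ⟨ζ, hζ⟩ := h.exists_generator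
  have hfin : Finite ↥H := by
    rw [← zpowers_eq_of_gen hζ]
    exact finite_zpowers_of (htor _)
  have haH : a ∈ H := Subgroup.subset_closure (by simp)
  have hxH : x ∈ H := Subgroup.subset_closure (by simp)
  set z : G := a ^ (m / d) with hz
  set w : G := x ^ (n / d) with hw
  have hzH : z ∈ H := H.pow_mem haH _
  have hwH : w ∈ H := H.pow_mem hxH _
  have hzo : orderOf z = d := orderOf_pow_div hm (Nat.gcd_dvd_left _ _)
  have hwo : orderOf w = d := orderOf_pow_div hn (Nat.gcd_dvd_right _ _)
  set z' : ↥H := ⟨z, hzH⟩ with hz'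
  set w' : ↥H := ⟨w, hwH⟩ with hw'
  have hzo' : orderOf z' = d := by rw [← orderOf_coe]; exact hzo
  have hwo' : orderOf w' = d := by rw [← orderOf_coe]; exact hwo
  set S : Set ↥H := {y : ↥H | y ^ d = 1} with hS
  have hsub : ∀ u : ↥H, orderOf u = d → (Subgroup.zpowers u : Set ↥H) ⊆ S := by
    rintro u hu _ ⟨k, rfl⟩
    show (u ^ k) ^ d = 1
    rw [← zpow_natCast, ← zpow_mul, mul_comm, zpow_mul, zpow_natCast, ← hu,
      pow_orderOf_eq_one, one_zpow]
  have hcard : ∀ u : ↥H, orderOf u = d → (Subgroup.zpowers u : Set ↥H).ncard = d := by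
    intro u hu
    rw [← Nat.card_coe_set_eq]
    simpa using (Nat.card_zpowers u).trans hu
  haveI : Fintype ↥H := Fintype.ofFinite _
  have hScard : S.ncard ≤ d := by
    rw [Set.ncard_eq_toFinset_card']
    have : S.toFinset = Finset.univ.filter (fun y : ↥H => y ^ d = 1) := by
      ext y; simp [hS]
    rw [this]
    exact IsCyclic.card_pow_eq_one_le hd0
  have hUz : (Subgroup.zpowers z' : Set ↥H) = S :=
    Set.eq_of_subset_of_ncard_le (hsub z' hzo') (by rw [hcard z' hzo']; exact hScard)
      (Set.toFinite _)
  have hUw : (Subgroup.zpowers w' : Set ↥H) = S :=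
    Set.eq_of_subset_of_ncard_le (hsub w' hwo') (by rw [hcard w' hwo']; exact hScard)
      (Set.toFinite _)
  have : z' ∈ Subgroup.zpowers w' := by
    have : z' ∈ (Subgroup.zpowers w' : Set ↥H) := by
      rw [hUw, ← hUz]; exact Subgroup.mem_zpowers z'
    exact this
  obtain ⟨k, hk⟩ := this
  have hkG : w ^ k = z := by simpa using congrArg Subtype.val hk
  have : z ∈ Subgroup.zpowers w := ⟨k, hkG⟩
  exact Subgroup.zpowers_le.2 (Subgroup.npow_mem_zpowers x _) this
lemma pair_step {a g : G} (hc : Commute a g) (ha : orderOf a ≠ 0) (hg : orderOf g ≠ 0)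
    (hd : Nat.gcd (orderOf a) (orderOf g) ∣
      Nat.card ↥(Subgroup.zpowers a ⊓ Subgroup.zpowers g)) :
    ∃ c : G, Subgroup.closure ({a, g} : Set G) = Subgroup.zpowers c ∧
      orderOf c = Nat.lcm (orderOf a) (orderOf g) := by
  classical
  set m := orderOf a
  set n := orderOf g
  haveI haF : Finite ↥(Subgroup.zpowers a) :=
    Nat.finite_of_card_ne_zero (by rwa [Nat.card_zpowers])
  haveI hgF : Finite ↥(Subgroup.zpowers g) :=
    Nat.finite_of_card_ne_zero (by rwa [Nat.card_zpowers])
  have comm : ∀ (p : ↥(Subgroup.zpowers a)) (q : ↥(Subgroup.zpowers g)),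
      Commute ((Subgroup.zpowers a).subtype p) ((Subgroup.zpowers g).subtype q) := by
    rintro ⟨_, i, rfl⟩ ⟨_, j, rfl⟩
    exact hc.zpow_zpow i j
  set φ := MonoidHom.noncommCoprod (Subgroup.zpowers a).subtype (Subgroup.zpowers g).subtype comm
    with hφ
  set H := Subgroup.closure ({a, g} : Set G) with hH
  have hrange : φ.range = H := by
    apply le_antisymm
    · rintro _ ⟨⟨p, q⟩, rfl⟩
      have hp : (p : G) ∈ H := Subgroup.zpowers_le.2 (Subgroup.subset_closure (by simp)) p.2
      have hq : (q : G) ∈ H := Subgroup.zpowers_le.2 (Subgroup.subset_closure (by simp)) q.2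
      exact H.mul_mem hp hq
    · rw [hH, Subgroup.closure_le]
      rintro u (rfl | rfl)
      · exact ⟨(⟨u, Subgroup.mem_zpowers u⟩, 1), by
          simp [hφ, MonoidHom.noncommCoprod_apply]⟩
      · exact ⟨(1, ⟨u, Subgroup.mem_zpowers u⟩), by
          simp [hφ, MonoidHom.noncommCoprod_apply]⟩
  haveI hHfin : Finite ↥H := by
    rw [← hrange]
    exact Finite.of_surjective (fun p => ⟨φ p, ⟨p, rfl⟩⟩ :
      (↥(Subgroup.zpowers a) × ↥(Subgroup.zpowers g)) → ↥φ.range)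
      (by rintro ⟨_, p, rfl⟩; exact ⟨p, rfl⟩)
  -- card identity
  have hcardeq : Nat.card ↥H * Nat.card ↥φ.ker = m * n := by
    have h1 := Subgroup.card_eq_card_quotient_mul_card_subgroup φ.ker
    have h2 : Nat.card ((↥(Subgroup.zpowers a) × ↥(Subgroup.zpowers g)) ⧸ φ.ker)
        = Nat.card ↥H := by
      rw [← hrange]
      exact Nat.card_congr (QuotientGroup.quotientKerEquivRange φ).toEquiv
    rw [h2] at h1
    rw [← h1, Nat.card_prod, Nat.card_zpowers, Nat.card_zpowers]
  -- injection from intersection into the kernel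
  have hker : Nat.gcd m n ≤ Nat.card ↥φ.ker := by
    have hinj : Function.Injective
        (fun w : ↥(Subgroup.zpowers a ⊓ Subgroup.zpowers g) =>
          (⟨(⟨w.1, w.2.1⟩, ⟨w.1⁻¹, (Subgroup.zpowers g).inv_mem w.2.2⟩), by
            simp [MonoidHom.mem_ker, hφ, MonoidHom.noncommCoprod_apply]⟩ : ↥φ.ker)) := by
      intro u v huv
      apply Subtype.ext
      have := congrArg (fun t : ↥φ.ker => ((t : (↥(Subgroup.zpowers a) × ↥(Subgroup.zpowers g))).1 : G)) huv
      simpa using this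
    have hfk : Finite ↥φ.ker := Subtype.finite
    have h1 := Nat.card_le_card_of_injective _ hinj
    refine le_trans ?_ h1
    have hpos : 0 < Nat.card ↥(Subgroup.zpowers a ⊓ Subgroup.zpowers g) := by
      haveI : Finite ↥(Subgroup.zpowers a ⊓ Subgroup.zpowers g) :=
        Finite.of_injective
          (fun w : ↥(Subgroup.zpowers a ⊓ Subgroup.zpowers g) =>
            (⟨w.1, w.2.1⟩ : ↥(Subgroup.zpowers a)))
          (fun u v huv => Subtype.ext (by simpa using congrArg Subtype.val huv))
      exact Nat.card_pos
    exact Nat.le_of_dvd hpos hd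
  have hgcd0 : 0 < Nat.gcd m n := Nat.gcd_pos_of_pos_left _ (Nat.pos_of_ne_zero ha)
  have hcard_le : Nat.card ↥H ≤ Nat.lcm m n := by
    have h1 : Nat.card ↥H * Nat.gcd m n ≤ Nat.card ↥H * Nat.card ↥φ.ker :=
      Nat.mul_le_mul_left _ hker
    rw [hcardeq, ← Nat.gcd_mul_lcm m n] at h1
    have h2 : Nat.gcd m n * Nat.card ↥H ≤ Nat.gcd m n * Nat.lcm m n := by
      rwa [mul_comm (Nat.card ↥H)] at h1
    exact Nat.le_of_mul_le_mul_left h2 hgcd0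
  letI : CommGroup ↥H := Subgroup.closureCommGroupOfComm (k := ({a, g} : Set G))
    (by rintro x (rfl | rfl) y (rfl | rfl)
        · rfl
        · exact hc
        · exact hc.symm
        · rfl)
  have haH : a ∈ H := Subgroup.subset_closure (by simp)
  have hgH : g ∈ H := Subgroup.subset_closure (by simp)
  have hmdvd : m ∣ Monoid.exponent ↥H := by
    have h1 := Monoid.order_dvd_exponent (⟨a, haH⟩ : ↥H)
    rwa [Subgroup.orderOf_mk] at h1
  have hndvd : n ∣ Monoid.exponent ↥H := by
    have h1 := Monoid.order_dvd_exponent (⟨g, hgH⟩ : ↥H)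
    rwa [Subgroup.orderOf_mk] at h1
  have hlcm_dvd : Nat.lcm m n ∣ Nat.card ↥H :=
    dvd_trans (Nat.lcm_dvd hmdvd hndvd) Group.exponent_dvd_nat_card
  have hcard : Nat.card ↥H = Nat.lcm m n :=
    le_antisymm hcard_le (Nat.le_of_dvd Nat.card_pos hlcm_dvd)
  have hexp : Monoid.exponent ↥H = Nat.card ↥H := by
    refine Nat.dvd_antisymm Group.exponent_dvd_nat_card ?_
    rw [hcard]
    exact Nat.lcm_dvd hmdvd hndvd
  haveI hcyc : IsCyclic ↥H := IsCyclic.of_exponent_eq_card hexp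
  obtain ⟨ζ, hζ⟩ := hcyc.exists_generator
  refine ⟨(ζ : G), (zpowers_eq_of_gen hζ).symm, ?_⟩
  have h1 : Nat.card ↥(Subgroup.zpowers (ζ : G)) = orderOf (ζ : G) := Nat.card_zpowers _
  rw [zpowers_eq_of_gen hζ, hcard] at h1
  exact h1.symm
lemma gcd_lcm_dvd (t : Finset G) (m k : ℕ) (hm : m ≠ 0)
    (htor : ∀ u : G, orderOf u ≠ 0) (hk : k ≠ 0)
    (h : ∀ x ∈ t, Nat.gcd m (orderOf x) ∣ k) :
    Nat.gcd m (t.lcm orderOf) ∣ k := by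
  classical
  induction t using Finset.induction_on with
  | empty => simp
  | insert a t hat ih =>
    have hlcm0 : t.lcm orderOf ≠ 0 := by
      intro h0
      rw [Finset.lcm_eq_zero_iff] at h0
      obtain ⟨x, -, hx⟩ := h0
      exact htor x hx
    rw [Finset.lcm_insert, lcm_eq_nat_lcm,
      gcd_lcm_distrib' hm (htor a) hlcm0]
    exact Nat.lcm_dvd (h a (Finset.mem_insert_self _ _))
      (ih fun x hx => h x (Finset.mem_insert_of_mem hx))

lemma main_closure (htor : ∀ u : G, orderOf u ≠ 0) (s : Finset G)
    (hcyc : ∀ x ∈ s, ∀ y ∈ s, IsCyclic ↥(Subgroup.closure ({x, y} : Set G))) :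
    ∃ g : G, Subgroup.closure (s : Set G) = Subgroup.zpowers g ∧
      orderOf g = s.lcm orderOf := by
  classical
  induction s using Finset.induction_on with
  | empty =>
    refine ⟨1, ?_, by simp⟩
    simp [Subgroup.zpowers_one_eq_bot]
  | insert a s hat ih =>
    obtain ⟨g, hgcl, hord⟩ := ih
      (fun x hx y hy => hcyc _ (Finset.mem_insert_of_mem hx) _ (Finset.mem_insert_of_mem hy))
    have hg0 : orderOf g ≠ 0 := htor g
    have hca : ∀ x ∈ s, Commute a x := fun x hx =>
      commute_of_cyclic (hcyc a (Finset.mem_insert_self _ _) x (Finset.mem_insert_of_mem hx))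
    have hcomm : Commute a g := by
      have hsub : (s : Set G) ⊆ ↑(Subgroup.centralizer {a}) := by
        intro x hx
        exact Subgroup.mem_centralizer_iff.2 (by rintro y rfl; exact (hca x hx).eq)
      have hgc : g ∈ Subgroup.centralizer {a} := by
        have hle : Subgroup.closure (s : Set G) ≤ Subgroup.centralizer {a} :=
          (Subgroup.closure_le _).2 hsub
        exact hle (hgcl ▸ Subgroup.mem_zpowers g)
      exact (Subgroup.mem_centralizer_iff.1 hgc a rfl)
    set J := Subgroup.zpowers a ⊓ Subgroup.zpowers g with hJ
    haveI hfa : Finite ↥(Subgroup.zpowers a) := finite_zpowers_of (htor a)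
    haveI : Finite ↥J :=
      Finite.of_injective
        (fun w : ↥J => (⟨w.1, w.2.1⟩ : ↥(Subgroup.zpowers a)))
        (fun u v huv => Subtype.ext (by simpa using congrArg Subtype.val huv))
    have hJpos : 0 < Nat.card ↥J := Nat.card_pos
    have hdvd : ∀ x ∈ s, Nat.gcd (orderOf a) (orderOf x) ∣ Nat.card ↥J := by
      intro x hx
      have hz := pow_gcd_mem_zpowers htor
        (hcyc a (Finset.mem_insert_self _ _) x (Finset.mem_insert_of_mem hx))
      set z := a ^ (orderOf a / Nat.gcd (orderOf a) (orderOf x)) with hzdef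
      have hz1 : z ∈ Subgroup.zpowers a := Subgroup.npow_mem_zpowers _ _
      have hz2 : z ∈ Subgroup.zpowers g := by
        have hxle : Subgroup.zpowers x ≤ Subgroup.zpowers g := by
          rw [← hgcl]
          exact Subgroup.zpowers_le.2 (Subgroup.subset_closure hx)
        exact hxle hz
      have hle : Subgroup.zpowers z ≤ J := Subgroup.zpowers_le.2 ⟨hz1, hz2⟩
      have hcz := Subgroup.card_dvd_of_le hle
      rwa [Nat.card_zpowers, hzdef,
        orderOf_pow_div (htor a) (Nat.gcd_dvd_left _ _)] at hcz
    have hgcddvd : Nat.gcd (orderOf a) (orderOf g) ∣ Nat.card ↥J := by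
      rw [hord]
      exact gcd_lcm_dvd s _ _ (htor a) htor hJpos.ne' hdvd
    obtain ⟨c, hccl, hcord⟩ := pair_step hcomm (htor a) hg0 hgcddvd
    refine ⟨c, ?_, ?_⟩
    · calc Subgroup.closure ↑(insert a s)
          = Subgroup.closure ({a} ∪ (s : Set G)) := by rw [Finset.coe_insert, Set.insert_eq]
        _ = Subgroup.closure {a} ⊔ Subgroup.closure (s : Set G) := Subgroup.closure_union _ _
        _ = Subgroup.closure {a} ⊔ Subgroup.closure {g} := by
            rw [hgcl, Subgroup.zpowers_eq_closure]
        _ = Subgroup.closure ({a} ∪ {g}) := (Subgroup.closure_union _ _).symm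
        _ = Subgroup.closure ({a, g} : Set G) := by rw [Set.singleton_union]
        _ = Subgroup.zpowers c := hccl
    · rw [hcord, hord, Finset.lcm_insert, lcm_eq_nat_lcm]

lemma isCyclic_zpowers (x : G) : IsCyclic ↥(Subgroup.zpowers x) := by
  refine ⟨⟨⟨x, Subgroup.mem_zpowers x⟩, ?_⟩⟩
  rintro ⟨_, k, rfl⟩
  exact ⟨k, Subtype.ext (by simp)⟩

end Helpers

/-- If `G` has finite exponent `e` and is not locally cyclic, then every
independent set of the non-cyclic graph has size at most `e`; moreover, when
`G` is finite, the independence number equals `max{|x| : x ∈ G} − |Cyc(G)|`. -/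
theorem independence_number_of_finite_exponent {G : Type*} [Group G] {e : ℕ}
    (he : Monoid.exponent G = e) (he0 : e ≠ 0)
    (hG : ∃ S : Finset G, ¬ IsCyclic ↥(Subgroup.closure (S : Set G))) :
    (∀ X : Set G, ncIndep X → X.Finite ∧ X.ncard ≤ e) ∧
    (∀ _ : Finite G,
      IsGreatest {k : ℕ | ∃ X : Set G, ncIndep X ∧ X.ncard = k}
        (sSup (Set.range fun x : G => orderOf x) - (cycSet G).ncard)) := by
  classical
  have htor : ∀ u : G, orderOf u ≠ 0 := by
    intro u h0
    have h1 := Monoid.order_dvd_exponent u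
    rw [he, h0] at h1
    exact he0 (Nat.eq_zero_of_zero_dvd h1)
  have hsingle : ∀ x : G, IsCyclic ↥(Subgroup.closure ({x, x} : Set G)) := by
    intro x
    have h1 : Subgroup.closure ({x, x} : Set G) = Subgroup.zpowers x := by
      rw [Set.pair_eq_singleton, ← Subgroup.zpowers_eq_closure]
    rw [h1]
    exact isCyclic_zpowers x
  have hcycX : ∀ X : Set G, ncIndep X → ∀ x ∈ X, ∀ y ∈ X,
      IsCyclic ↥(Subgroup.closure ({x, y} : Set G)) := by
    intro X hX x hx y hy
    rcases eq_or_ne x y with rfl | hxy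
    · exact hsingle x
    · exact hX.2 x hx y hy hxy
  -- part 1
  have hb : ∀ X : Set G, ncIndep X → ∀ t : Finset G, ↑t ⊆ X → t.card ≤ e := by
    intro X hX t ht
    obtain ⟨g, hgcl, hord⟩ := main_closure htor t
      (fun x hx y hy => hcycX X hX x (ht hx) y (ht hy))
    have h1 : (t : Set G) ⊆ (Subgroup.zpowers g : Set G) := by
      rw [← hgcl]; exact Subgroup.subset_closure
    haveI hfin : Finite ↥(Subgroup.zpowers g) := finite_zpowers_of (htor g)
    have hfin' : (Subgroup.zpowers g : Set G).Finite := @Set.toFinite _ _ hfin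
    have h2 : t.card ≤ (Subgroup.zpowers g : Set G).ncard := by
      rw [← Set.ncard_coe_finset]
      exact Set.ncard_le_ncard h1 hfin'
    have h3 : (Subgroup.zpowers g : Set G).ncard = orderOf g := by
      rw [← Nat.card_coe_set_eq]
      exact Nat.card_zpowers g
    have h4 : orderOf g ∣ e := by
      rw [hord]
      exact Finset.lcm_dvd fun x _ => he ▸ Monoid.order_dvd_exponent x
    calc t.card ≤ orderOf g := h3 ▸ h2
      _ ≤ e := Nat.le_of_dvd (Nat.pos_of_ne_zero he0) h4
  have part1 : ∀ X : Set G, ncIndep X → X.Finite ∧ X.ncard ≤ e := by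
    intro X hX
    have hXfin : X.Finite := by
      by_contra hinf
      obtain ⟨t, htX, htfin, htcard⟩ :=
        Set.Infinite.exists_subset_ncard_eq hinf (e + 1)
      have h1 := hb X hX htfin.toFinset (by rw [Set.Finite.coe_toFinset]; exact htX)
      rw [← Set.ncard_eq_toFinset_card t htfin] at h1
      omega
    refine ⟨hXfin, ?_⟩
    have h1 := hb X hX hXfin.toFinset (by rw [Set.Finite.coe_toFinset])
    rwa [← Set.ncard_eq_toFinset_card X hXfin] at h1
  refine ⟨part1, ?_⟩
  intro hGfin
  set M := sSup (Set.range fun x : G => orderOf x) with hM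
  have hbdd : BddAbove (Set.range fun x : G => orderOf x) := (Set.finite_range _).bddAbove
  obtain ⟨x0, hx0⟩ := Nat.sSup_mem (⟨orderOf 1, ⟨1, rfl⟩⟩ :
    (Set.range fun x : G => orderOf x).Nonempty) hbdd
  have hx0' : orderOf x0 = M := hx0
  have hMmax : ∀ u : G, orderOf u ≤ M := fun u => le_csSup hbdd ⟨u, rfl⟩
  have hcycsub : cycSet G ⊆ (Subgroup.zpowers x0 : Set G) := by
    intro y hy
    have hcy : IsCyclic ↥(Subgroup.closure ({x0, y} : Set G)) := hy x0
    obtain ⟨ζ, hζ⟩ := hcy.exists_generator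
    have hHeq := zpowers_eq_of_gen hζ
    have hx0mem : x0 ∈ Subgroup.closure ({x0, y} : Set G) :=
      Subgroup.subset_closure (by simp)
    have hymem : y ∈ Subgroup.closure ({x0, y} : Set G) :=
      Subgroup.subset_closure (by simp)
    have hle : Subgroup.zpowers x0 ≤ Subgroup.zpowers ((ζ : G)) := by
      rw [hHeq]; exact Subgroup.zpowers_le.2 hx0mem
    have hcard : Nat.card ↥(Subgroup.zpowers ((ζ : G))) ≤ Nat.card ↥(Subgroup.zpowers x0) := by
      rw [Nat.card_zpowers, Nat.card_zpowers, hx0']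
      exact hMmax _
    have heq := subgroup_eq_of_le_of_card_le hle (finite_zpowers_of (htor _)) hcard
    show y ∈ Subgroup.zpowers x0
    rw [heq, hHeq]
    exact hymem
  have hncz : (Subgroup.zpowers x0 : Set G).ncard = M := by
    rw [← Nat.card_coe_set_eq]
    exact (Nat.card_zpowers x0).trans hx0'
  -- upper bound
  have hub : ∀ X : Set G, ncIndep X → X.ncard + (cycSet G).ncard ≤ M := by
    intro X hX
    set Y := X ∪ cycSet G with hY
    set t := (Set.toFinite Y).toFinset with ht
    have hmemt : ∀ x ∈ t, x ∈ Y := fun x hx => (Set.Finite.mem_toFinset _).1 hx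
    have hcyct : ∀ x ∈ t, ∀ y ∈ t, IsCyclic ↥(Subgroup.closure ({x, y} : Set G)) := by
      intro x hx y hy
      rcases hmemt y hy with hyX | hyC
      · rcases hmemt x hx with hxX | hxC
        · exact hcycX X hX x hxX y hyX
        · have h1 : ({x, y} : Set G) = {y, x} := Set.pair_comm x y
          rw [h1]
          exact hxC y
      · exact hyC x
    obtain ⟨g, hgcl, -⟩ := main_closure htor t hcyct
    have hYsub : Y ⊆ (Subgroup.zpowers g : Set G) := by
      intro u hu
      rw [← hgcl]
      exact Subgroup.subset_closure ((Set.Finite.mem_toFinset _).2 hu)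
    haveI hfin : Finite ↥(Subgroup.zpowers g) := finite_zpowers_of (htor g)
    have hfin' : (Subgroup.zpowers g : Set G).Finite := @Set.toFinite _ _ hfin
    have h1 : Y.ncard ≤ M := by
      calc Y.ncard ≤ (Subgroup.zpowers g : Set G).ncard := Set.ncard_le_ncard hYsub hfin'
        _ = orderOf g := by
            rw [← Nat.card_coe_set_eq]
            exact Nat.card_zpowers g
        _ ≤ M := hMmax g
    have hdisj : Disjoint X (cycSet G) :=
      Set.disjoint_left.2 fun u hu hc => (hX.1 hu).2 hc
    rwa [hY, Set.ncard_union_eq hdisj (Set.toFinite X) (Set.toFinite _)] at h1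
  constructor
  · -- membership
    set X0 : Set G := (Subgroup.zpowers x0 : Set G) \ cycSet G with hX0def
    have hX0 : ncIndep X0 := by
      constructor
      · exact fun u hu => ⟨trivial, hu.2⟩
      · intro x hx y hy hxy
        have hle : Subgroup.closure ({x, y} : Set G) ≤ Subgroup.zpowers x0 := by
          rw [Subgroup.closure_le]
          rintro u (rfl | rfl)
          · exact hx.1
          · exact hy.1
        haveI := isCyclic_zpowers x0
        exact Subgroup.isCyclic_of_le hle
    refine ⟨X0, hX0, ?_⟩
    rw [hX0def, Set.ncard_diff hcycsub (Set.toFinite _), hncz]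
  · rintro k ⟨X, hX, rfl⟩
    exact Nat.le_sub_of_add_le (hub X hX)
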